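/- arXiv:2407.19561 — 2 statements merged into one kernel-verified Lean document; each statement's English description precedes it below -/
import Mathlib

section
/- Let d ≥ 1 and let F : ℂ → ℂ be a degree-d semi-polynomial such that F(z) is a non-negative real number for every z with |z| = 1, and F is not identically zero on the unit circle. Let z be distributed according to the uniform (Haar) probability measure on the unit circle {z ∈ ℂ : |z| = 1}. Then for every ε > 0, Pr[ F(z) ≤ ε · E[F(z)] ] ≤ (8d/π + 1) · ε^{1/(2d)}. -/
open MeasureTheory
open scoped ComplexOrder Real

/-- `F : ℂ → ℂ` is a degree-`d` semi-polynomial in one complex variable: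
a polynomial of total degree at most `d` in `z` and its complex conjugate. -/
def IsSemiPoly1 (d : ℕ) (F : ℂ → ℂ) : Prop :=
  ∃ p : MvPolynomial (Fin 2) ℂ, p.totalDegree ≤ d ∧
    ∀ z : ℂ, F z = MvPolynomial.eval ![z, (starRingEnd ℂ) z] p

/-- The uniform probability measure on `[0, 2π)`, parameterizing the unit circle
via `θ ↦ exp(iθ)`. -/
noncomputable def circleUniform : Measure ℝ :=
  (ENNReal.ofReal (2 * π))⁻¹ • volume.restrict (Set.Ico 0 (2 * π))

/-- compatibility: the complex absolute value, i.e. the norm -/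
noncomputable def Complex.abs : AbsoluteValue ℂ ℝ :=
  IsAbsoluteValue.toAbsoluteValue (norm : ℂ → ℝ)

lemma Complex.norm_eq_abs (z : ℂ) : ‖z‖ = Complex.abs z := rfl

lemma Complex.abs_apply' (z : ℂ) : Complex.abs z = ‖z‖ := rfl

open Polynomial Real in
lemma exists_polyG (d : ℕ) (p : MvPolynomial (Fin 2) ℂ) (hp : p.totalDegree ≤ d) :
    ∃ G : Polynomial ℂ, G.natDegree ≤ 2 * d ∧
      ∀ z : ℂ, ‖z‖ = 1 → G.eval z = z ^ d * MvPolynomial.eval ![z, (starRingEnd ℂ) z] p := by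
  classical
  have hdeg : ∀ m ∈ p.support, (m : Fin 2 →₀ ℕ) 0 + m 1 ≤ d := by
    intro m hm
    have h1 : (m.sum fun _ e => e) ≤ p.totalDegree := MvPolynomial.le_totalDegree hm
    have h2 : (m.sum fun _ e => e) = ∑ i : Fin 2, m i := Finsupp.sum_fintype _ _ (fun _ => rfl)
    have h3 : ∑ i : Fin 2, m i = m 0 + m 1 := Fin.sum_univ_two _
    omega
  refine ⟨p.support.sum (fun m => Polynomial.C (MvPolynomial.coeff m p) *
      Polynomial.X ^ (d + m 0 - m 1)), ?_, ?_⟩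
  · apply Polynomial.natDegree_sum_le_of_forall_le
    intro m hm
    refine (Polynomial.natDegree_C_mul_le _ _).trans ?_
    rw [Polynomial.natDegree_X_pow]
    have := hdeg m hm; omega
  · intro z hz
    have hz0 : z ≠ 0 := by
      intro h; rw [h] at hz; simp at hz
    have hconj : (starRingEnd ℂ) z = z⁻¹ := by
      have : z * (starRingEnd ℂ) z = 1 := by
        rw [Complex.mul_conj]
        norm_cast
        rw [Complex.normSq_eq_norm_sq, hz]; norm_num
      field_simp at this ⊢
      linear_combination this
    rw [MvPolynomial.eval_eq']
    rw [Polynomial.eval_finset_sum, Finset.mul_sum]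
    apply Finset.sum_congr rfl
    intro m hm
    simp only [Polynomial.eval_mul, Polynomial.eval_C, Polynomial.eval_pow, Polynomial.eval_X]
    rw [Fin.prod_univ_two]
    simp only [Matrix.cons_val_zero, Matrix.cons_val_one, Matrix.head_cons]
    rw [hconj, inv_pow]
    rw [pow_sub₀ z hz0 (by have := hdeg m hm; omega)]
    ring

lemma mprod_nonneg (s : Multiset ℝ) (h : ∀ x ∈ s, 0 ≤ x) : 0 ≤ s.prod := by
  induction s using Multiset.induction with
  | empty => simp
  | cons a t ih =>
    rw [Multiset.prod_cons]
    exact mul_nonneg (h a (Multiset.mem_cons_self a t))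
      (ih fun x hx => h x (Multiset.mem_cons_of_mem hx))

lemma mprod_map_nonneg {α : Type*} (s : Multiset α) (f : α → ℝ) (h : ∀ x ∈ s, 0 ≤ f x) :
    0 ≤ (s.map f).prod := by
  apply mprod_nonneg
  intro x hx
  obtain ⟨y, hy, rfl⟩ := Multiset.mem_map.mp hx
  exact h y hy

lemma mprod_le {α : Type*} (s : Multiset α) (f g : α → ℝ) (h0 : ∀ x ∈ s, 0 ≤ f x)
    (h : ∀ x ∈ s, f x ≤ g x) : (s.map f).prod ≤ (s.map g).prod := by
  induction s using Multiset.induction with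
  | empty => simp
  | cons a t ih =>
    simp only [Multiset.map_cons, Multiset.prod_cons]
    have hft : 0 ≤ (t.map f).prod :=
      mprod_map_nonneg t f (fun x hx => h0 x (Multiset.mem_cons_of_mem hx))
    exact mul_le_mul (h a (Multiset.mem_cons_self a t))
      (ih (fun x hx => h0 x (Multiset.mem_cons_of_mem hx))
        (fun x hx => h x (Multiset.mem_cons_of_mem hx))) hft
      ((h0 a (Multiset.mem_cons_self a t)).trans (h a (Multiset.mem_cons_self a t)))

lemma mprod_pos {α : Type*} (s : Multiset α) (f : α → ℝ) (h : ∀ x ∈ s, 0 < f x) :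
    0 < (s.map f).prod := by
  induction s using Multiset.induction with
  | empty => simp
  | cons a t ih =>
    simp only [Multiset.map_cons, Multiset.prod_cons]
    exact mul_pos (h a (Multiset.mem_cons_self a t))
      (ih fun x hx => h x (Multiset.mem_cons_of_mem hx))

/-- extraction: some factor is small -/
lemma exists_small_factor {α : Type*} (s : Multiset α) (hs : s ≠ 0) (f g : α → ℝ)
    (hf : ∀ x ∈ s, 0 < f x)
    (hprod : (s.map g).prod ≤ (s.map f).prod) : ∃ a ∈ s, g a ≤ f a := by
  by_contra hc
  push_neg at hc
  obtain ⟨a, ha⟩ := Multiset.exists_mem_of_ne_zero hs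
  obtain ⟨t, rfl⟩ := Multiset.exists_cons_of_mem ha
  simp only [Multiset.map_cons, Multiset.prod_cons] at hprod
  have h1 : (t.map f).prod ≤ (t.map g).prod :=
    mprod_le t f g (fun x hx => (hf x (Multiset.mem_cons_of_mem hx)).le)
      (fun x hx => (hc x (Multiset.mem_cons_of_mem hx)).le)
  have h2 : 0 < (t.map g).prod :=
    mprod_pos t g (fun x hx => (hf x (Multiset.mem_cons_of_mem hx)).trans
      (hc x (Multiset.mem_cons_of_mem hx)))
  have h3 : 0 < f a := hf a (Multiset.mem_cons_self a t)
  have h4 : f a < g a := hc a (Multiset.mem_cons_self a t)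
  have h5 : 0 ≤ (t.map f).prod :=
    mprod_map_nonneg t f (fun x hx => (hf x (Multiset.mem_cons_of_mem hx)).le)
  nlinarith

open Real in
set_option maxHeartbeats 1000000 in
lemma perRoot_measure (a : ℂ) (s : ℝ) (hs0 : 0 < s) (hs1 : s ≤ 3/5) :
    volume {θ : ℝ | θ ∈ Set.Ico 0 (2*π) ∧
        Complex.abs (Complex.exp (θ*Complex.I) - a) ≤ s * max 1 (Complex.abs a)}
      ≤ ENNReal.ofReal (4*s) := by
  by_cases ha : a = 0
  · have : {θ : ℝ | θ ∈ Set.Ico 0 (2*π) ∧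
        Complex.abs (Complex.exp (θ*Complex.I) - a) ≤ s * max 1 (Complex.abs a)} = ∅ := by
      ext θ
      simp only [Set.mem_setOf_eq, Set.mem_empty_iff_false, iff_false, not_and, ha]
      intro _
      rw [sub_zero]
      have h1 : Complex.abs (Complex.exp (θ*Complex.I)) = 1 := by
        rw [← Complex.norm_eq_abs, Complex.norm_exp]; simp
      rw [h1]
      simp only [map_zero]
      rw [max_eq_left zero_le_one]
      nlinarith
    rw [this]; simp
  ·
    set t := Complex.abs a with ht
    set α := Complex.arg a with hα
    have ht0 : 0 < t := by rwa [ht, AbsoluteValue.pos_iff]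
    have hα1 : -π < α := Complex.neg_pi_lt_arg a
    have hα2 : α ≤ π := Complex.arg_le_pi a
    have hpi : (0:ℝ) < π := pi_pos
    -- β := arcsin s
    set β := arcsin s with hβ
    have hβ0 : 0 < β := arcsin_pos.2 hs0
    have hsin : sin β = s := sin_arcsin (by linarith) (by linarith)
    have hβ1 : β ≤ 1 := by
      rw [hβ, arcsin_le_iff_le_sin ⟨by linarith, by linarith⟩
        ⟨by nlinarith [pi_gt_three], by nlinarith [pi_gt_three]⟩]
      nlinarith [sin_gt_sub_cube (by norm_num : (0:ℝ) < 1)]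
    have hβ2s : β ≤ 2 * s := by
      nlinarith [sin_gt_sub_cube hβ0, hsin, sq_nonneg β, hβ0.le]
    have hβpi2 : β < π / 2 := by nlinarith [pi_gt_three]
    have hcosβ : cos β = Real.sqrt (1 - s^2) := cos_arcsin s
    -- key: membership implies cos (θ - α) ≥ cos β
    have key : ∀ θ : ℝ, Complex.abs (Complex.exp (θ*Complex.I) - a) ≤ s * max 1 t →
        cos β ≤ cos (θ - α) := by
      intro θ h
      have hnsq : Complex.normSq (Complex.exp (θ*Complex.I) - a)
          = 1 + t^2 - 2 * t * cos (θ - α) := by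
        rw [Complex.normSq_sub]
        have h1 : Complex.normSq (Complex.exp (θ*Complex.I)) = 1 := by
          rw [Complex.normSq_eq_norm_sq, Complex.norm_exp]; simp
        have h2 : Complex.normSq a = t^2 := by rw [Complex.normSq_eq_norm_sq, ht]; rfl
        have h3 : (Complex.exp (θ*Complex.I) * (starRingEnd ℂ) a).re
            = t * cos (θ - α) := by
          rw [Complex.mul_re, Complex.conj_re, Complex.conj_im,
            Complex.exp_ofReal_mul_I_re, Complex.exp_ofReal_mul_I_im, Real.cos_sub,
            Complex.cos_arg ha, Complex.sin_arg, Complex.norm_eq_abs, ← ht]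
          field_simp
          try ring
        rw [h1, h2, h3]
        ring
      -- squares
      have hu : (0:ℝ) < max 1 t := lt_of_lt_of_le one_pos (le_max_left _ _)
      have habs2 : Complex.normSq (Complex.exp (θ*Complex.I) - a) ≤ s^2 * (max 1 t)^2 := by
        rw [Complex.normSq_eq_norm_sq, Complex.norm_eq_abs]
        have := Complex.abs.nonneg (Complex.exp (θ*Complex.I) - a)
        nlinarith
      rw [hnsq] at habs2
      rw [hcosβ]
      have hsq : Real.sqrt (1 - s^2) ^ 2 = 1 - s^2 :=
        Real.sq_sqrt (by nlinarith)
      have hsqnn : 0 ≤ Real.sqrt (1 - s^2) := Real.sqrt_nonneg _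
      rcases le_total t 1 with hc | hc
      · have hmax : max 1 t = 1 := max_eq_left hc
        rw [hmax] at habs2
        nlinarith [sq_nonneg (t - Real.sqrt (1 - s^2))]
      · have hmax : max 1 t = t := max_eq_right hc
        rw [hmax] at habs2
        nlinarith [sq_nonneg (1 - t * Real.sqrt (1 - s^2))]
    -- membership implies θ in one of two intervals
    have incl : {θ : ℝ | θ ∈ Set.Ico 0 (2*π) ∧
          Complex.abs (Complex.exp (θ*Complex.I) - a) ≤ s * max 1 t}
        ⊆ (Set.Icc (α-β) (α+β) ∩ Set.Ico 0 (2*π)) ∪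
          (Set.Icc (α+2*π-β) (α+2*π+β) ∩ Set.Ico 0 (2*π)) := by
      rintro θ ⟨hθI, hθ⟩
      have hcos := key θ hθ
      obtain ⟨hθ0, hθ2π⟩ := hθI
      obtain ⟨k, h1⟩ : ∃ k : ℤ, |(θ - α) / (2*π) - k| ≤ 1/2 :=
        ⟨round ((θ - α) / (2*π)), abs_sub_round _⟩
      have hy : |θ - α - 2*π*k| ≤ π := by
        have h2 : θ - α - 2*π*k = ((θ - α) / (2*π) - k) * (2*π) := by
          field_simp
        rw [h2, abs_mul, abs_of_pos (by linarith : (0:ℝ) < 2*π)]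
        nlinarith [abs_nonneg ((θ - α) / (2*π) - (k:ℝ))]
      have hcosy : cos (θ - α - 2*π*k) = cos (θ - α) := by
        have := Real.cos_sub_int_mul_two_pi (θ - α) k
        rw [← this]; ring_nf
      have hyβ : |θ - α - 2*π*k| ≤ β := by
        by_contra hcon
        push_neg at hcon
        have h1 : cos |θ - α - 2*π*k| < cos β := by
          apply Real.strictAntiOn_cos ⟨hβ0.le, by linarith⟩ ⟨abs_nonneg _, hy⟩ hcon
        rw [Real.cos_abs, hcosy] at h1
        linarith
      rw [abs_le] at hyβ
      -- bound k
      have hk0 : (0:ℤ) ≤ k := by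
        by_contra hcon
        push_neg at hcon
        have h2 : (k:ℝ) ≤ -1 := by exact_mod_cast Int.le_sub_one_of_lt hcon
        have h3 : 2*π*(k:ℝ) ≤ 2*π*(-1) :=
          mul_le_mul_of_nonneg_left h2 (by linarith : (0:ℝ) ≤ 2*π)
        have h4 := hyβ.2
        linarith [pi_gt_three]
      have hk1 : k ≤ 1 := by
        by_contra hcon
        push_neg at hcon
        have h2 : (2:ℝ) ≤ (k:ℝ) := by exact_mod_cast hcon
        have h3 : 2*π*(2:ℝ) ≤ 2*π*(k:ℝ) :=
          mul_le_mul_of_nonneg_left h2 (by linarith : (0:ℝ) ≤ 2*π)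
        have h4 := hyβ.1
        linarith [pi_gt_three]
      have hk01 : k = 0 ∨ k = 1 := by omega
      rcases hk01 with rfl | rfl
      · left
        refine ⟨⟨?_, ?_⟩, hθ0, hθ2π⟩
        · have := hyβ.1; push_cast at this; linarith
        · have := hyβ.2; push_cast at this; linarith
      · right
        refine ⟨⟨?_, ?_⟩, hθ0, hθ2π⟩
        · have := hyβ.1; push_cast at this; linarith
        · have := hyβ.2; push_cast at this; linarith
    refine le_trans (measure_mono incl) ?_
    clear incl key hcosβ hsin
    clear_value t α β
    have h2β : ENNReal.ofReal (2*β) ≤ ENNReal.ofReal (4*s) :=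
      ENNReal.ofReal_le_ofReal (by linarith)
    rcases le_or_gt β α with hcase | hcase
    · -- second interval empty
      have he : (Set.Icc (α+2*π-β) (α+2*π+β) ∩ Set.Ico 0 (2*π)) = ∅ := by
        ext x
        simp only [Set.mem_inter_iff, Set.mem_Icc, Set.mem_Ico, Set.mem_empty_iff_false,
          iff_false, not_and]
        intro h1 h2
        linarith [h1.1]
      rw [he, Set.union_empty]
      refine le_trans (measure_mono Set.inter_subset_left) ?_
      rw [Real.volume_Icc]
      refine le_trans (ENNReal.ofReal_le_ofReal (by ring_nf; linarith)) h2β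
    rcases le_or_gt 0 (α + β) with hcase2 | hcase2
    · refine le_trans (measure_union_le _ _) ?_
      have hA1 : (Set.Icc (α-β) (α+β) ∩ Set.Ico 0 (2*π)) ⊆ Set.Icc 0 (α+β) := by
        rintro x ⟨hx1, hx2⟩
        exact ⟨hx2.1, hx1.2⟩
      have hA2 : (Set.Icc (α+2*π-β) (α+2*π+β) ∩ Set.Ico 0 (2*π)) ⊆ Set.Icc (α+2*π-β) (2*π) := by
        rintro x ⟨hx1, hx2⟩
        exact ⟨hx1.1, hx2.2.le⟩
      refine le_trans (add_le_add (measure_mono hA1) (measure_mono hA2)) ?_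
      rw [Real.volume_Icc, Real.volume_Icc]
      have hadd := ENNReal.ofReal_add (p := α+β-0) (q := 2*π - (α+2*π-β))
        (by linarith) (by linarith)
      rw [← hadd]
      exact le_trans (ENNReal.ofReal_le_ofReal (by linarith)) h2β
    · -- first interval empty
      have he : (Set.Icc (α-β) (α+β) ∩ Set.Ico 0 (2*π)) = ∅ := by
        ext x
        simp only [Set.mem_inter_iff, Set.mem_Icc, Set.mem_Ico, Set.mem_empty_iff_false,
          iff_false, not_and]
        intro h1 h2
        linarith [h1.2]
      rw [he, Set.empty_union]
      refine le_trans (measure_mono Set.inter_subset_left) ?_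
      rw [Real.volume_Icc]
      refine le_trans (ENNReal.ofReal_le_ofReal (by ring_nf; linarith)) h2β

lemma circleUniform_univ : circleUniform Set.univ = 1 := by
  rw [circleUniform, Measure.smul_apply, Measure.restrict_apply_univ, Real.volume_Ico,
    smul_eq_mul, sub_zero]
  rw [ENNReal.inv_mul_cancel]
  · simp [Real.pi_pos, Real.two_pi_pos]
  · exact ENNReal.ofReal_ne_top

instance : IsProbabilityMeasure circleUniform := ⟨circleUniform_univ⟩

set_option maxHeartbeats 1000000 in
open Polynomial in
/-- Anti-concentration on the unit circle: if `F` is a degree-`d` semi-polynomial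
that is real and non-negative on the unit circle and not identically zero there, then
for `z` Haar-uniform on the circle, `Pr[F(z) ≤ ε·E[F(z)]] ≤ (8d/π + 1)·ε^{1/(2d)}`. -/
theorem anticoncentration_circle (d : ℕ) (hd : 1 ≤ d) (F : ℂ → ℂ)
    (hF : IsSemiPoly1 d F)
    (hpos : ∀ z : ℂ, ‖z‖ = 1 → 0 ≤ F z)
    (hne : ∃ z : ℂ, ‖z‖ = 1 ∧ F z ≠ 0) :
    ∀ ε : ℝ, 0 < ε →
      circleUniform {θ : ℝ | (F (Complex.exp (θ * Complex.I))).re ≤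
          ε * ∫ θ', (F (Complex.exp (θ' * Complex.I))).re ∂circleUniform}
        ≤ ENNReal.ofReal ((8 * d / π + 1) * ε ^ (1 / (2 * d) : ℝ)) := by
  have hF' : ∃ p : MvPolynomial (Fin 2) ℂ, p.totalDegree ≤ d ∧
      ∀ z : ℂ, F z = MvPolynomial.eval ![z, (starRingEnd ℂ) z] p := hF
  clear hF
  rename' hF' => hF

  intro ε hε
  obtain ⟨p, hpd, hpF⟩ := hF
  obtain ⟨G, hGdeg, hGeval⟩ := exists_polyG d p hpd
  have hnorm : ∀ θ : ℝ, ‖Complex.exp ((θ:ℂ) * Complex.I)‖ = 1 := by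
    intro θ
    rw [Complex.norm_exp]
    simp
  -- G ≠ 0
  obtain ⟨z₀, hz₀, hFz₀⟩ := hne
  have hz₀0 : z₀ ≠ 0 := by intro h; rw [h] at hz₀; simp at hz₀
  have hG0 : G ≠ 0 := by
    intro h
    apply hFz₀
    have h1 : G.eval z₀ = z₀ ^ d * F z₀ := by rw [hGeval z₀ hz₀, ← hpF z₀]
    rw [h, Polynomial.eval_zero] at h1
    have := (mul_eq_zero.mp h1.symm).resolve_left (pow_ne_zero d hz₀0)
    exact this
  set c := G.leadingCoeff with hc
  have hc0 : c ≠ 0 := Polynomial.leadingCoeff_ne_zero.2 hG0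
  have hcpos : 0 < Complex.abs c := by rwa [AbsoluteValue.pos_iff]
  have hsplits : Splits G := IsAlgClosed.splits G
  have hcard : G.roots.card = G.natDegree := (Polynomial.splits_iff_card_roots).1 hsplits
  have hfact := hsplits.eq_prod_roots
  -- pointwise formula
  have hpoint : ∀ θ : ℝ, (F (Complex.exp ((θ:ℂ) * Complex.I))).re
      = Complex.abs c *
        ((G.roots.map (fun a => Complex.abs (Complex.exp ((θ:ℂ) * Complex.I) - a))).prod) := by
    intro θ
    set e := Complex.exp ((θ:ℂ) * Complex.I) with he
    have hnn := hpos e (hnorm θ)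
    rw [Complex.nonneg_iff] at hnn
    have habs : Complex.abs (F e) = (F e).re := by
      have him : (F e).im = 0 := hnn.2.symm
      have : F e = ((F e).re : ℂ) := Complex.ext rfl (by simp [him])
      rw [this]
      simp [Complex.abs_apply', abs_of_nonneg hnn.1]
    have hGe : Complex.abs (G.eval e) = Complex.abs (F e) := by
      rw [hGeval e (hnorm θ), ← hpF e, map_mul, map_pow]
      have : Complex.abs e = 1 := by rw [← Complex.norm_eq_abs]; exact hnorm θ
      rw [this, one_pow, one_mul]
    rw [← habs, ← hGe]
    conv_lhs => rw [hfact]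
    rw [Polynomial.eval_mul, Polynomial.eval_C, map_mul]
    congr 1
    rw [Polynomial.eval_multiset_prod, Multiset.map_map]
    rw [map_multiset_prod, Multiset.map_map]
    congr 1
    apply Multiset.map_congr rfl
    intro a _
    simp
  -- integral bound
  set E := ∫ θ', (F (Complex.exp ((θ':ℂ) * Complex.I))).re ∂circleUniform with hE
  set B2 := Complex.abs c * ((G.roots.map (fun a => 2 * max 1 (Complex.abs a))).prod) with hB2
  have hptB : ∀ θ : ℝ, (F (Complex.exp ((θ:ℂ) * Complex.I))).re ≤ B2 := by
    intro θ
    rw [hpoint θ, hB2]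
    apply mul_le_mul_of_nonneg_left _ (Complex.abs.nonneg c)
    apply mprod_le
    · intro x _; exact Complex.abs.nonneg _
    · intro x _
      calc Complex.abs (Complex.exp ((θ:ℂ) * Complex.I) - x)
          ≤ Complex.abs (Complex.exp ((θ:ℂ) * Complex.I)) + Complex.abs x := by
            exact (Complex.abs.sub_le _ 0 _).trans (by simp)
        _ = 1 + Complex.abs x := by
            rw [← Complex.norm_eq_abs (Complex.exp _), hnorm θ]
        _ ≤ 2 * max 1 (Complex.abs x) := by
            rcases le_total (Complex.abs x) 1 with h | h
            · rw [max_eq_left h]; linarith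
            · rw [max_eq_right h]; linarith
  have hB2nn : 0 ≤ B2 := by
    rw [hB2]
    apply mul_nonneg (Complex.abs.nonneg c)
    apply mprod_map_nonneg
    intro x _
    positivity
  have hEB : E ≤ B2 := by
    rw [hE]
    by_cases hi : Integrable (fun θ' : ℝ => (F (Complex.exp ((θ':ℂ) * Complex.I))).re)
        circleUniform
    · calc ∫ θ', (F (Complex.exp ((θ':ℂ) * Complex.I))).re ∂circleUniform
          ≤ ∫ _, B2 ∂circleUniform := integral_mono hi (integrable_const B2) hptB
        _ = B2 := by simp
    · rw [integral_undef hi]; exact hB2nn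
  -- main case analysis
  set r := ε ^ (1 / (2 * (d:ℝ))) with hr
  have hr0 : 0 < r := Real.rpow_pos_of_pos hε _
  by_cases hbig : 1 ≤ (8 * d / π + 1) * r
  · refine le_trans (prob_le_one) ?_
    rw [← ENNReal.ofReal_one]
    exact ENNReal.ofReal_le_ofReal hbig
  · push_neg at hbig
    have hd1 : (1:ℝ) ≤ d := by exact_mod_cast hd
    have hπ3 : 3 < π := Real.pi_gt_three
    have hπ4 : π < 3.15 := Real.pi_lt_d2
    have hπ0 : 0 < π := Real.pi_pos
    have hrsmall : r < π / (8 + π) := by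
      have h1 : (8/π + 1) * r ≤ (8*(d:ℝ)/π + 1) * r := by
        apply mul_le_mul_of_nonneg_right _ hr0.le
        have h8 : 8/π ≤ 8*(d:ℝ)/π := (div_le_div_iff_of_pos_right hπ0).2 (by linarith)
        linarith
      rw [lt_div_iff₀ (by linarith : (0:ℝ) < 8 + π)]
      have h2 : (8/π + 1) * r < 1 := lt_of_le_of_lt h1 hbig
      have h3 : (8/π + 1) = (8 + π)/π := by field_simp
      rw [h3] at h2
      calc r * (8 + π) = ((8+π)/π * r) * π := by field_simp
        _ < 1 * π := by
            apply mul_lt_mul_of_pos_right _ hπ0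
            exact h2
        _ = π := one_mul π
    have hr310 : r ≤ 3/10 := by
      have : π / (8 + π) ≤ 3/10 := by
        rw [div_le_div_iff₀ (by linarith) (by norm_num)]
        nlinarith
      linarith
    have hε1 : ε < 1 := by
      by_contra hcon
      push_neg at hcon
      have h1 : (1:ℝ) ≤ r := by
        rw [hr]
        calc (1:ℝ) = 1 ^ (1 / (2 * (d:ℝ))) := (Real.one_rpow _).symm
          _ ≤ ε ^ (1 / (2 * (d:ℝ))) := Real.rpow_le_rpow zero_le_one hcon (by positivity)
      linarith
    set sS := 2 * r with hsS
    have hsS0 : 0 < sS := by rw [hsS]; linarith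
    have hsS35 : sS ≤ 3/5 := by rw [hsS]; linarith
    have hcard2d : (Multiset.card G.roots) ≤ 2 * d := hcard ▸ hGdeg
    -- inclusion into union over roots
    have hincl : {θ : ℝ | (F (Complex.exp ((θ:ℂ) * Complex.I))).re ≤ ε * E} ∩ Set.Ico 0 (2*π) ⊆
        ⋃ a ∈ G.roots.toFinset, {θ : ℝ | θ ∈ Set.Ico 0 (2*π) ∧
          Complex.abs (Complex.exp ((θ:ℂ)*Complex.I) - a) ≤ sS * max 1 (Complex.abs a)} := by
      rintro θ ⟨hθS, hθI⟩
      simp only [Set.mem_setOf_eq] at hθS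
      set e := Complex.exp ((θ:ℂ) * Complex.I) with he
      set Pm := (G.roots.map (fun a => max 1 (Complex.abs a))).prod with hPm
      have hPmnn : 0 ≤ Pm := mprod_map_nonneg _ _ (fun x _ => by positivity)
      have h1 : Complex.abs c * ((G.roots.map (fun a => Complex.abs (e - a))).prod)
          ≤ ε * B2 := by
        rw [← hpoint θ]
        exact le_trans hθS (mul_le_mul_of_nonneg_left hEB hε.le)
      have hconstsplit : ∀ t : ℝ, (G.roots.map (fun a => t * max 1 (Complex.abs a))).prod
          = t ^ (Multiset.card G.roots) * Pm := by
        intro t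
        have h9 : t ^ (Multiset.card G.roots) * Pm
            = (G.roots.map (fun _ => t)).prod * (G.roots.map (fun a => max 1 (Complex.abs a))).prod := by
          rw [Multiset.map_const', Multiset.prod_replicate, hPm]
        rw [h9, ← Multiset.prod_map_mul]
      have hsplit2 : (G.roots.map (fun a => 2 * max 1 (Complex.abs a))).prod
          = 2 ^ (Multiset.card G.roots) * Pm := hconstsplit 2
      have h2 : ((G.roots.map (fun a => Complex.abs (e - a))).prod)
          ≤ ε * (2 ^ (Multiset.card G.roots) * Pm) := by
        have h3 : ε * B2 = Complex.abs c * (ε * (2 ^ (Multiset.card G.roots) * Pm)) := by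
          rw [hB2, hsplit2]; ring
        rw [h3] at h1
        exact (mul_le_mul_iff_right₀ hcpos).mp h1
      have hrpow : ε ≤ r ^ (Multiset.card G.roots) := by
        have h4 : r ^ (Multiset.card G.roots)
            = ε ^ ((1 / (2 * (d:ℝ))) * (Multiset.card G.roots)) := by
          rw [hr, ← Real.rpow_natCast (ε ^ (1 / (2 * (d:ℝ)))) _, ← Real.rpow_mul hε.le]
        have hexp : (1 / (2 * (d:ℝ))) * (Multiset.card G.roots) ≤ 1 := by
          rw [div_mul_eq_mul_div, one_mul, div_le_one (by positivity)]
          exact_mod_cast hcard2d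
        rw [h4]
        calc ε = ε ^ (1:ℝ) := (Real.rpow_one ε).symm
          _ ≤ ε ^ ((1 / (2 * (d:ℝ))) * (Multiset.card G.roots)) :=
            Real.rpow_le_rpow_of_exponent_ge hε hε1.le hexp
      have hkey : ((G.roots.map (fun a => Complex.abs (e - a))).prod)
          ≤ ((G.roots.map (fun a => sS * max 1 (Complex.abs a))).prod) := by
        rw [hconstsplit sS]
        refine le_trans h2 ?_
        have h5 : sS ^ (Multiset.card G.roots)
            = 2 ^ (Multiset.card G.roots) * r ^ (Multiset.card G.roots) := by
          rw [hsS, mul_pow]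
        rw [h5]
        have h6 : ε * 2 ^ (Multiset.card G.roots)
            ≤ 2 ^ (Multiset.card G.roots) * r ^ (Multiset.card G.roots) := by
          rw [mul_comm]
          exact mul_le_mul_of_nonneg_left hrpow (by positivity)
        calc ε * (2 ^ (Multiset.card G.roots) * Pm)
            = (ε * 2 ^ (Multiset.card G.roots)) * Pm := by ring
          _ ≤ (2 ^ (Multiset.card G.roots) * r ^ (Multiset.card G.roots)) * Pm :=
            mul_le_mul_of_nonneg_right h6 hPmnn
      by_cases hroots : G.roots = 0
      · exfalso
        rw [hroots] at h2
        simp only [Multiset.map_zero, Multiset.prod_zero, Multiset.card_zero, pow_zero,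
          hPm, hroots] at h2
        simp at h2
        linarith
      · obtain ⟨a, ha, hsmall⟩ := exists_small_factor G.roots hroots
          (fun a => sS * max 1 (Complex.abs a)) (fun a => Complex.abs (e - a))
          (fun x _ => by positivity) hkey
        refine Set.mem_biUnion (Multiset.mem_toFinset.2 ha) ⟨hθI, hsmall⟩
    -- measure computation
    have hmeas : circleUniform {θ : ℝ | (F (Complex.exp ((θ:ℂ) * Complex.I))).re ≤ ε * E}
        = (ENNReal.ofReal (2*π))⁻¹ *
          volume ({θ : ℝ | (F (Complex.exp ((θ:ℂ) * Complex.I))).re ≤ ε * E}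
            ∩ Set.Ico 0 (2*π)) := by
      rw [circleUniform, Measure.smul_apply, Measure.restrict_apply' measurableSet_Ico,
        smul_eq_mul]
    rw [hmeas]
    calc (ENNReal.ofReal (2*π))⁻¹ *
          volume ({θ : ℝ | (F (Complex.exp ((θ:ℂ) * Complex.I))).re ≤ ε * E}
            ∩ Set.Ico 0 (2*π))
        ≤ (ENNReal.ofReal (2*π))⁻¹ * ((2*d : ℕ) * ENNReal.ofReal (4*sS)) := by
          apply mul_le_mul_right
          refine le_trans (measure_mono hincl) ?_
          refine le_trans (measure_biUnion_finset_le _ _) ?_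
          refine le_trans (Finset.sum_le_card_nsmul _ _ (ENNReal.ofReal (4*sS))
            (fun a _ => perRoot_measure a sS hsS0 hsS35)) ?_
          rw [nsmul_eq_mul]
          apply mul_le_mul_left
          have hcc : G.roots.toFinset.card ≤ 2*d :=
            le_trans (Multiset.toFinset_card_le _) hcard2d
          exact_mod_cast Nat.cast_le.2 hcc
      _ ≤ ENNReal.ofReal ((8 * d / π + 1) * r) := by
          rw [← ENNReal.ofReal_inv_of_pos (by linarith : (0:ℝ) < 2*π)]

          have hnat : ((2*d : ℕ) : ENNReal) = ENNReal.ofReal ((2*d : ℕ) : ℝ) :=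
            (ENNReal.ofReal_natCast _).symm
          rw [hnat, ← ENNReal.ofReal_mul (by positivity), ← ENNReal.ofReal_mul (by positivity)]
          apply ENNReal.ofReal_le_ofReal
          push_cast
          rw [hsS]
          have heq : (2*π)⁻¹ * (2*(d:ℝ) * (4*(2*r))) = 8*(d:ℝ)*r/π := by
            field_simp
            ring
          rw [heq]
          have : 8*(d:ℝ)*r/π = (8*(d:ℝ)/π) * r := by ring
          rw [this]
          nlinarith
end

section
/- Let n ≥ 2 and d ≥ 1, and let F : ℂⁿ → ℂ be a degree-d semi-polynomial. Then there exists a degree-d semi-polynomial P : ℂ → ℂ such that for every u_1 ∈ ℂ with |u_1| ≤ 1, P(u_1) = E_{u'}[ F(u_1, √(1 − |u_1|²) · u') ], where u' is a Haar-random unit vector in ℂ^{n−1}. Equivalently: if u = (u_1, …, u_n) is a Haar-random unit vector in ℂⁿ, then the conditional expectation of F(u) given u_1 is a degree-d semi-polynomial in u_1. -/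
open MeasureTheory

/-- `F : ℂ^ι → ℂ` is a degree-`d` semi-polynomial: a polynomial of total degree
at most `d` in the variables `z i` and their complex conjugates. -/
def IsSemiPoly {ι : Type*} (d : ℕ) (F : (ι → ℂ) → ℂ) : Prop :=
  ∃ p : MvPolynomial (ι ⊕ ι) ℂ, p.totalDegree ≤ d ∧
    ∀ z : ι → ℂ, F z = MvPolynomial.eval (Sum.elim z (fun i => (starRingEnd ℂ) (z i))) p

/-- `μ` is the Haar (unitarily invariant) probability measure on the unit sphere
of `ℂⁿ`, viewed as a measure on `ℂⁿ` supported on the sphere. -/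
def IsHaarSphere (n : ℕ) (μ : Measure (Fin n → ℂ)) : Prop :=
  IsProbabilityMeasure μ ∧
    μ {u : Fin n → ℂ | ∑ i, ‖u i‖ ^ 2 = 1} = 1 ∧
    ∀ U : Matrix.unitaryGroup (Fin n) ℂ,
      μ.map (fun u => (U : Matrix (Fin n) (Fin n) ℂ).mulVec u) = μ


open ComplexConjugate

lemma sphere_ae {n : ℕ} {ν : Measure (Fin n → ℂ)} (hν : IsHaarSphere n ν) :
    ∀ᵐ u ∂ν, ∑ i, ‖u i‖ ^ 2 = 1 := by
  have : IsProbabilityMeasure ν := hν.1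
  rw [ae_iff]
  have hmeas : MeasurableSet {u : Fin n → ℂ | ∑ i, ‖u i‖ ^ 2 = 1} :=
    (isClosed_eq (by fun_prop) continuous_const).measurableSet
  have : ν {u : Fin n → ℂ | ∑ i, ‖u i‖ ^ 2 = 1}ᶜ = 0 := by
    rw [measure_compl hmeas (measure_ne_top ν _), hν.2.1, measure_univ, tsub_self]
  simpa [Set.compl_setOf] using this

lemma coord_bound {n : ℕ} {u : Fin n → ℂ} (h : ∑ i, ‖u i‖ ^ 2 = 1) (j : Fin n) :
    ‖u j‖ ≤ 1 := by
  have h2 : ‖u j‖ ^ 2 ≤ 1 := by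
    rw [← h]
    exact Finset.single_le_sum (f := fun i => ‖u i‖ ^ 2) (fun i _ => by positivity) (Finset.mem_univ j)
  exact (pow_le_one_iff_of_nonneg (norm_nonneg _) two_ne_zero).mp h2

lemma integrable_mono {n : ℕ} {ν : Measure (Fin n → ℂ)} (hν : IsHaarSphere n ν)
    (e f : Fin n → ℕ) :
    Integrable (fun u : Fin n → ℂ => (∏ j, u j ^ e j) * ∏ j, conj (u j) ^ f j) ν := by
  have : IsProbabilityMeasure ν := hν.1
  have hcont : Continuous fun u : Fin n → ℂ => (∏ j, u j ^ e j) * ∏ j, conj (u j) ^ f j := by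
    refine (continuous_finset_prod _ fun j _ => ?_).mul (continuous_finset_prod _ fun j _ => ?_)
    · exact (continuous_apply j).pow _
    · exact (Complex.continuous_conj.comp (continuous_apply j)).pow _
  refine (integrable_const (1 : ℝ)).mono' hcont.aestronglyMeasurable ?_
  filter_upwards [sphere_ae hν] with u hu
  have hb : ∀ j, ‖u j‖ ≤ 1 := coord_bound hu
  rw [norm_mul]
  refine mul_le_one₀ ?_ (norm_nonneg _) ?_ <;>
  · rw [norm_prod]
    refine Finset.prod_le_one (fun j _ => norm_nonneg _) (fun j _ => ?_)
    rw [norm_pow]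
    first
    | exact pow_le_one₀ (norm_nonneg _) (hb j)
    | · rw [RCLike.norm_conj]
        exact pow_le_one₀ (norm_nonneg _) (hb j)

lemma cont_mono {n : ℕ} (e f : Fin n → ℕ) :
    Continuous fun u : Fin n → ℂ => (∏ j, u j ^ e j) * ∏ j, conj (u j) ^ f j := by
  refine (continuous_finset_prod _ fun j _ => ?_).mul (continuous_finset_prod _ fun j _ => ?_)
  · exact (continuous_apply j).pow _
  · exact (Complex.continuous_conj.comp (continuous_apply j)).pow _

lemma vanish {n : ℕ} {ν : Measure (Fin n → ℂ)} (hν : IsHaarSphere n ν)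
    (e f : Fin n → ℕ) (hne : ∑ j, e j ≠ ∑ j, f j) :
    ∫ u, (∏ j, u j ^ e j) * ∏ j, conj (u j) ^ f j ∂ν = 0 := by
  set g : (Fin n → ℂ) → ℂ := fun u => (∏ j, u j ^ e j) * ∏ j, conj (u j) ^ f j with hg
  set A := ∑ j, e j
  set B := ∑ j, f j
  have hAB : (A : ℝ) - B ≠ 0 := sub_ne_zero.mpr (by exact_mod_cast hne)
  set θ : ℝ := Real.pi / ((A : ℝ) - B) with hθ
  set c : ℂ := Complex.exp (θ * Complex.I) with hc
  have hns : Complex.normSq c = 1 := by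
    rw [Complex.normSq_eq_norm_sq, Complex.norm_exp_ofReal_mul_I]; norm_num
  have hcc : c * conj c = 1 := by rw [Complex.mul_conj, hns]; norm_num
  have hM : (c • (1 : Matrix (Fin n) (Fin n) ℂ)) ∈ Matrix.unitaryGroup (Fin n) ℂ := by
    rw [Matrix.mem_unitaryGroup_iff]
    rw [star_smul, star_one, Matrix.smul_mul, Matrix.mul_smul, Matrix.one_mul,
      smul_smul]
    norm_cast
    rw [show star c = conj c from rfl, hcc, one_smul]
  have hinv := hν.2.2 ⟨_, hM⟩
  have hmap : (fun u : Fin n → ℂ => (c • (1 : Matrix (Fin n) (Fin n) ℂ)).mulVec u)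
      = fun u => c • u := by
    funext u; rw [Matrix.smul_mulVec, Matrix.one_mulVec]
  have hconj : conj c = Complex.exp (-(θ * Complex.I)) := by
    rw [hc, ← Complex.exp_conj]
    congr 1
    simp [Complex.conj_ofReal]
  have hfac : c ^ A * conj c ^ B = -1 := by
    rw [hconj, hc, ← Complex.exp_nat_mul, ← Complex.exp_nat_mul, ← Complex.exp_add,
      ← Complex.exp_pi_mul_I]
    congr 1
    have : ((A : ℂ) - B) * θ = Real.pi := by
      have : ((A : ℝ) - B) * θ = Real.pi := by rw [hθ, mul_comm, div_mul_cancel₀ _ hAB]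
      calc ((A : ℂ) - B) * θ = (((((A:ℝ) - B) * θ) : ℝ) : ℂ) := by push_cast; ring
        _ = Real.pi := by rw [this]
    calc (A : ℂ) * (θ * Complex.I) + B * -(θ * Complex.I)
        = ((A : ℂ) - B) * θ * Complex.I := by ring
      _ = Real.pi * Complex.I := by rw [this]
  have key : ∀ u, g (c • u) = (c ^ A * conj c ^ B) * g u := by
    intro u
    simp only [hg, Pi.smul_apply, smul_eq_mul, map_mul, mul_pow, Finset.prod_mul_distrib,
      Finset.prod_pow_eq_pow_sum]
    ring
  have hstep : ∫ u, g u ∂ν = (c ^ A * conj c ^ B) * ∫ u, g u ∂ν := by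
    conv_lhs => rw [← hinv]
    rw [hmap, integral_map (by fun_prop) (cont_mono e f).aestronglyMeasurable]
    calc ∫ u, g ((fun u => c • u) u) ∂ν = ∫ u, (c ^ A * conj c ^ B) * g u ∂ν := by
          simp only [key]
      _ = (c ^ A * conj c ^ B) * ∫ u, g u ∂ν := integral_const_mul _ _
  rw [hfac] at hstep
  have : (2 : ℂ) * ∫ u, g u ∂ν = 0 := by linear_combination hstep
  simpa using this

open MvPolynomial in
/-- If `F : ℂ^{n+1} → ℂ` is a degree-`d` semi-polynomial and `u = (u₁, …, u_{n+1})` is a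
Haar-random unit vector in `ℂ^{n+1}`, then the conditional expectation of `F(u)` given `u₁`,
namely `u₁ ↦ E_{u'}[F(u₁, √(1−|u₁|²)·u')]` for `u'` Haar-random on the unit sphere of `ℂⁿ`,
is a degree-`d` semi-polynomial in `u₁`. -/
theorem conditional_expectation_semipoly (n d : ℕ) (hn : 1 ≤ n) (hd : 1 ≤ d)
    (F : (Fin (n + 1) → ℂ) → ℂ) (hF : IsSemiPoly d F)
    (ν : Measure (Fin n → ℂ)) (hν : IsHaarSphere n ν) :
    ∃ P : ℂ → ℂ, IsSemiPoly1 d P ∧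
      ∀ u₁ : ℂ, ‖u₁‖ ≤ 1 →
        P u₁ = ∫ u', F (Fin.cons u₁
            (fun j => (Real.sqrt (1 - ‖u₁‖ ^ 2) : ℂ) * u' j)) ∂ν := by
  classical
  obtain ⟨p, hpd, hpe⟩ := hF
  set a : ((Fin (n + 1) ⊕ Fin (n + 1)) →₀ ℕ) → ℕ := fun m => m (.inl 0) with ha
  set b : ((Fin (n + 1) ⊕ Fin (n + 1)) →₀ ℕ) → ℕ := fun m => m (.inr 0) with hb
  set A : ((Fin (n + 1) ⊕ Fin (n + 1)) →₀ ℕ) → ℕ := fun m => ∑ j : Fin n, m (.inl j.succ)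
    with hA
  set B : ((Fin (n + 1) ⊕ Fin (n + 1)) →₀ ℕ) → ℕ := fun m => ∑ j : Fin n, m (.inr j.succ)
    with hB
  set I : ((Fin (n + 1) ⊕ Fin (n + 1)) →₀ ℕ) → ℂ := fun m =>
    ∫ u', (∏ j, u' j ^ m (.inl j.succ)) * ∏ j, conj (u' j) ^ m (.inr j.succ) ∂ν with hI
  set q : MvPolynomial (Fin 2) ℂ := ∑ m ∈ p.support,
    if A m = B m then
      C (MvPolynomial.coeff m p * I m) *
        (X 0 ^ a m * X 1 ^ b m * (1 - X 0 * X 1) ^ A m)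
    else 0 with hq
  have hdeg : ∀ m ∈ p.support, a m + b m + (A m + B m) ≤ d := by
    intro m hm
    have h1 : (m.sum fun _ k => k) ≤ p.totalDegree := le_totalDegree hm
    have h2 : (m.sum fun _ k => k) = ∑ i, m i := Finsupp.sum_fintype _ _ (fun _ => rfl)
    rw [h2, Fintype.sum_sum_type, Fin.sum_univ_succ, Fin.sum_univ_succ] at h1
    have h3 := h1.trans hpd
    simp only [ha, hb, hA, hB]
    omega
  have hqdeg : q.totalDegree ≤ d := by
    rw [hq]
    refine (totalDegree_finset_sum _ _).trans (Finset.sup_le fun m hm => ?_)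
    by_cases hAB : A m = B m
    · rw [if_pos hAB]
      refine (totalDegree_mul _ _).trans ?_
      rw [totalDegree_C, zero_add]
      refine (totalDegree_mul _ _).trans ?_
      have h2 : ((1 : MvPolynomial (Fin 2) ℂ) - X 0 * X 1).totalDegree ≤ 2 := by
        refine (totalDegree_sub _ _).trans (max_le (by simp [totalDegree_one]) ?_)
        exact (totalDegree_mul _ _).trans (by rw [totalDegree_X, totalDegree_X])
      have h6 : (((1 : MvPolynomial (Fin 2) ℂ) - X 0 * X 1) ^ A m).totalDegree ≤ A m * 2 :=
        (totalDegree_pow _ _).trans (Nat.mul_le_mul_left _ h2)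
      have h5 : ((X 0 : MvPolynomial (Fin 2) ℂ) ^ a m * X 1 ^ b m).totalDegree ≤ a m + b m :=
        (totalDegree_mul _ _).trans (by rw [totalDegree_X_pow, totalDegree_X_pow])
      have h7 := hdeg m hm
      refine (Nat.add_le_add h5 h6).trans ?_
      omega
    · rw [if_neg hAB]
      simp
  refine ⟨fun u₁ => MvPolynomial.eval ![u₁, conj u₁] q, ⟨q, hqdeg, fun z => rfl⟩, ?_⟩
  intro u₁ h1
  have hs0 : (0:ℝ) ≤ 1 - ‖u₁‖ ^ 2 := by nlinarith [norm_nonneg u₁]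
  set s : ℝ := Real.sqrt (1 - ‖u₁‖ ^ 2) with hs
  have hs2 : ((s : ℂ)) ^ 2 = 1 - u₁ * conj u₁ := by
    calc ((s : ℂ)) ^ 2 = ((s ^ 2 : ℝ) : ℂ) := by push_cast; ring
      _ = ((1 - ‖u₁‖ ^ 2 : ℝ) : ℂ) := by rw [hs, Real.sq_sqrt hs0]
      _ = 1 - u₁ * conj u₁ := by
          rw [Complex.mul_conj, Complex.normSq_eq_norm_sq]
          push_cast
          ring
  have hz : ∀ (u' : Fin n → ℂ) (m : (Fin (n + 1) ⊕ Fin (n + 1)) →₀ ℕ),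
      (∏ i, (Sum.elim (Fin.cons u₁ fun j => (s : ℂ) * u' j)
        (fun i => conj ((Fin.cons u₁ fun j => (s : ℂ) * u' j : Fin (n+1) → ℂ) i)) i ^ m i))
      = u₁ ^ a m * conj u₁ ^ b m * (s : ℂ) ^ (A m + B m) *
        ((∏ j, u' j ^ m (.inl j.succ)) * ∏ j, conj (u' j) ^ m (.inr j.succ)) := by
    intro u' m
    rw [Fintype.prod_sum_type]
    simp only [Sum.elim_inl, Sum.elim_inr]
    rw [Fin.prod_univ_succ, Fin.prod_univ_succ]
    simp only [Fin.cons_zero, Fin.cons_succ, map_mul, Complex.conj_ofReal, mul_pow,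
      Finset.prod_mul_distrib, Finset.prod_pow_eq_pow_sum]
    simp only [ha, hb, hA, hB]
    rw [pow_add]
    ring
  have hFeq : ∀ u' : Fin n → ℂ, F (Fin.cons u₁ fun j => (s : ℂ) * u' j) =
      ∑ m ∈ p.support,
        (MvPolynomial.coeff m p * (u₁ ^ a m * conj u₁ ^ b m * (s : ℂ) ^ (A m + B m))) *
        ((∏ j, u' j ^ m (.inl j.succ)) * ∏ j, conj (u' j) ^ m (.inr j.succ)) := by
    intro u'
    rw [hpe, MvPolynomial.eval_eq']
    refine Finset.sum_congr rfl fun m hm => ?_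
    rw [hz u' m]
    ring
  have hRHS : ∫ u', F (Fin.cons u₁ fun j => (s : ℂ) * u' j) ∂ν =
      ∑ m ∈ p.support,
        (MvPolynomial.coeff m p * (u₁ ^ a m * conj u₁ ^ b m * (s : ℂ) ^ (A m + B m))) * I m := by
    simp only [hFeq]
    rw [integral_finset_sum _ (fun m _ => (integrable_mono hν _ _).const_mul _)]
    exact Finset.sum_congr rfl fun m hm => integral_const_mul _ _
  rw [hRHS]
  beta_reduce
  rw [map_sum]
  refine Finset.sum_congr rfl fun m hm => ?_
  by_cases hAB : A m = B m
  · rw [if_pos hAB]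
    simp only [map_mul, map_pow, map_sub, map_one, eval_C, eval_X, Matrix.cons_val_zero,
      Matrix.cons_val_one, Matrix.head_cons]
    rw [← hs2, ← pow_mul, two_mul]
    nth_rewrite 2 [hAB]
    ring
  · rw [if_neg hAB]
    have h0 : I m = 0 := vanish hν _ _ hAB
    simp [h0]
end
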